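/- arXiv:1105.3538 — 4 statements merged into one kernel-verified Lean document; each statement's English description precedes it below -/
import Mathlib

section
/- (The crossover heuristic in the Walsh basis.) Let x ∈ Λ, let χ be a crossover-mask distribution, let y = C(x), and let ŷ = Wy. Then for every k ∈ Ω, ŷ_k = √n · Σ_{m ∈ Ω} ((χ_m + χ_{m̄})/2) · x̂_{k⊗m} · x̂_{k⊗m̄}, where x̂ = Wx. -/
open Finset

noncomputable section

/-- `#u`: the number of one-bits of `u` (sum of binary digits). -/
def pc (u : ℕ) : ℕ := (Nat.digits 2 u).sum

/-- `ū`: the bitwise complement of `u` within `ℓ` bits. -/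
def cpl (ℓ u : ℕ) : ℕ := u ^^^ (2 ^ ℓ - 1)

/-- `Ω_u`: the set of `v < 2^ℓ` with `v ⊗ u = v`. -/
def omg (ℓ u : ℕ) : Finset ℕ := (Finset.range (2 ^ ℓ)).filter (fun v => v &&& u = v)

/-- `I(u)`: the set of indices `i < ℓ` where bit `i` of `u` is one. -/
def idx (ℓ u : ℕ) : Finset ℕ := (Finset.range ℓ).filter (fun i => u.testBit i)

/-- The schema average `x_k^{(u)} = Σ_{i ∈ Ω_{ū}} x_{i ⊕ k}`. -/
def schAvg (ℓ : ℕ) (x : ℕ → ℝ) (u k : ℕ) : ℝ := ∑ i ∈ omg ℓ (cpl ℓ u), x (i ^^^ k)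

/-- The Walsh transform `x̂ = W x`, with `W_{i,j} = n^{-1/2} (-1)^{i^T j}`. -/
def walsh (ℓ : ℕ) (x : ℕ → ℝ) (k : ℕ) : ℝ :=
  (Real.sqrt (2 ^ ℓ))⁻¹ * ∑ j ∈ Finset.range (2 ^ ℓ), (-1 : ℝ) ^ pc (k &&& j) * x j

/-- Proportional selection `F(x)_k = f_k x_k / Σ_j f_j x_j`. -/
def propSel (ℓ : ℕ) (f x : ℕ → ℝ) (k : ℕ) : ℝ :=
  f k * x k / ∑ j ∈ Finset.range (2 ^ ℓ), f j * x j

/-- The crossover heuristic for a crossover-mask distribution `χ`. -/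
def crossH (ℓ : ℕ) (χ : ℕ → ℝ) (x : ℕ → ℝ) (k : ℕ) : ℝ :=
  ∑ i ∈ Finset.range (2 ^ ℓ), ∑ j ∈ Finset.range (2 ^ ℓ), x i * x j *
    ∑ m ∈ Finset.range (2 ^ ℓ), ((χ m + χ (cpl ℓ m)) / 2) *
      (if (i &&& m) ^^^ (j &&& cpl ℓ m) = k then (1 : ℝ) else 0)

/-- The mutation heuristic for a mutation-mask distribution `μ`. -/
def mutH (ℓ : ℕ) (μ : ℕ → ℝ) (x : ℕ → ℝ) (k : ℕ) : ℝ :=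
  ∑ j ∈ Finset.range (2 ^ ℓ), μ (j ^^^ k) * x j

/-- Mask distribution of independent bitwise mutation with rates `p i`:
`μ_m = ∏_i p_i^{m_i} (1-p_i)^{1-m_i}` (with `0^0 = 1`). -/
def mutDist (ℓ : ℕ) (p : ℕ → ℝ) (m : ℕ) : ℝ :=
  ∏ i ∈ Finset.range ℓ, (if m.testBit i then p i else 1 - p i)

/-- Mask distribution of one-point crossover with crossover rate `c` (for `ℓ ≥ 2`). -/
def onePoint (ℓ : ℕ) (c : ℝ) (m : ℕ) : ℝ :=
  if m = 0 then 1 - c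
  else if ∃ i ∈ Finset.Ico 1 ℓ, m = 2 ^ i - 1 then c / ((ℓ : ℝ) - 1)
  else 0

/-- `hi(u)`: index of the highest one-bit of `u` (`hi 0 = 0`). -/
def hiBit (u : ℕ) : ℕ := Nat.log2 u

/-- `lo(u)`: index of the lowest one-bit of `u` (`lo 0 = ℓ - 1`). -/
def loBit (ℓ u : ℕ) : ℕ := if u = 0 then ℓ - 1 else padicValNat 2 u

/-- The defining length `L(u) = hi(u) - lo(u)`. -/
def defLen (ℓ u : ℕ) : ℕ := hiBit u - loBit ℓ u


lemma pc_rec (u : ℕ) : pc u = u % 2 + pc (u / 2) := by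
  rcases Nat.eq_zero_or_pos u with h | h
  · simp [h, pc]
  · unfold pc
    rw [Nat.digits_def' (by norm_num) h, List.sum_cons]

lemma neg_one_pow_mod_two (n : ℕ) : ((-1 : ℝ)) ^ (n % 2) = (-1) ^ n := by
  rcases Nat.even_or_odd n with h | h
  · rw [Nat.even_iff.mp h, h.neg_one_pow]; rfl
  · rw [Nat.odd_iff.mp h, h.neg_one_pow, pow_one]

lemma sign_xor (a : ℕ) : ∀ b : ℕ, ((-1 : ℝ)) ^ pc (a ^^^ b) = (-1) ^ pc a * (-1) ^ pc b := by
  induction a using Nat.strong_induction_on with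
  | _ a ih =>
    intro b
    rcases Nat.eq_zero_or_pos a with h | h
    · simp [h, pc]
    · rw [pc_rec (a ^^^ b), pc_rec a, pc_rec b, Nat.xor_div_two, Nat.xor_mod_two_eq,
        pow_add, pow_add, pow_add, ih (a / 2) (Nat.div_lt_self h one_lt_two) (b / 2),
        neg_one_pow_mod_two, pow_add, neg_one_pow_mod_two, neg_one_pow_mod_two]
      ring

/-- **The crossover heuristic in the Walsh basis.**  For `x ∈ Λ`, a crossover-mask
distribution `χ`, `y = C(x)` and `ŷ = W y`:
`ŷ_k = √n Σ_m ((χ_m + χ_{m̄})/2) x̂_{k⊗m} x̂_{k⊗m̄}`. -/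
theorem crossover_heuristic_walsh
    (ℓ : ℕ) (hℓ : 1 ≤ ℓ) (x χ : ℕ → ℝ)
    (hx0 : ∀ i ∈ Finset.range (2 ^ ℓ), 0 ≤ x i)
    (hx1 : ∑ i ∈ Finset.range (2 ^ ℓ), x i = 1)
    (hχ0 : ∀ m ∈ Finset.range (2 ^ ℓ), 0 ≤ χ m)
    (hχ1 : ∑ m ∈ Finset.range (2 ^ ℓ), χ m = 1)
    (k : ℕ) (hk : k < 2 ^ ℓ) :
    walsh ℓ (crossH ℓ χ x) k =
      Real.sqrt (2 ^ ℓ) *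
        ∑ m ∈ Finset.range (2 ^ ℓ), ((χ m + χ (cpl ℓ m)) / 2) *
          walsh ℓ x (k &&& m) * walsh ℓ x (k &&& cpl ℓ m) := by
  have hnpos : (0:ℝ) < (2:ℝ) ^ ℓ := by positivity
  have hs : Real.sqrt ((2:ℝ) ^ ℓ) ≠ 0 := ne_of_gt (Real.sqrt_pos.mpr hnpos)
  set c : ℕ → ℝ := fun m => (χ m + χ (cpl ℓ m)) / 2 with hc
  set S : ℕ → ℝ := fun u => ∑ j ∈ Finset.range (2^ℓ), (-1:ℝ) ^ pc (u &&& j) * x j with hS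
  have key : ∑ j ∈ Finset.range (2^ℓ), (-1:ℝ) ^ pc (k &&& j) * crossH ℓ χ x j
      = ∑ m ∈ Finset.range (2^ℓ), c m * (S (k &&& m) * S (k &&& cpl ℓ m)) := by
    have step1 : ∑ j ∈ Finset.range (2^ℓ), (-1:ℝ) ^ pc (k &&& j) * crossH ℓ χ x j
        = ∑ i ∈ Finset.range (2^ℓ), ∑ i' ∈ Finset.range (2^ℓ), ∑ m ∈ Finset.range (2^ℓ),
            (-1:ℝ) ^ pc ((k &&& m) &&& i) * (-1:ℝ) ^ pc ((k &&& cpl ℓ m) &&& i')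
              * (x i * x i' * c m) := by
      simp only [crossH, Finset.mul_sum]
      rw [Finset.sum_comm]
      refine Finset.sum_congr rfl fun i hi => ?_
      rw [Finset.sum_comm]
      refine Finset.sum_congr rfl fun i' hi' => ?_
      rw [Finset.sum_comm]
      refine Finset.sum_congr rfl fun m hm => ?_
      have hA : (i &&& m) ^^^ (i' &&& cpl ℓ m) < 2^ℓ := by
        have h1 : i &&& m < 2^ℓ := Nat.and_lt_two_pow i (Finset.mem_range.mp hm)
        have hcpl : cpl ℓ m < 2^ℓ := Nat.xor_lt_two_pow (Finset.mem_range.mp hm)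
          (Nat.sub_lt (by positivity) one_pos)
        exact Nat.xor_lt_two_pow h1 (Nat.and_lt_two_pow i' hcpl)
      simp only [mul_ite, mul_one, mul_zero, Finset.sum_ite_eq]
      rw [if_pos (Finset.mem_range.mpr hA)]
      rw [Nat.and_xor_distrib_left, sign_xor]
      have e1 : k &&& (i &&& m) = (k &&& m) &&& i := by
        rw [Nat.and_comm i m, Nat.and_assoc]
      have e2 : k &&& (i' &&& cpl ℓ m) = (k &&& cpl ℓ m) &&& i' := by
        rw [Nat.and_comm i' (cpl ℓ m), Nat.and_assoc]
      rw [e1, e2]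
    have step2 : ∑ m ∈ Finset.range (2^ℓ), c m * (S (k &&& m) * S (k &&& cpl ℓ m))
        = ∑ i ∈ Finset.range (2^ℓ), ∑ i' ∈ Finset.range (2^ℓ), ∑ m ∈ Finset.range (2^ℓ),
            (-1:ℝ) ^ pc ((k &&& m) &&& i) * (-1:ℝ) ^ pc ((k &&& cpl ℓ m) &&& i')
              * (x i * x i' * c m) := by
      have expand : ∀ m, c m * (S (k &&& m) * S (k &&& cpl ℓ m))
          = ∑ i ∈ Finset.range (2^ℓ), ∑ i' ∈ Finset.range (2^ℓ),
              (-1:ℝ) ^ pc ((k &&& m) &&& i) * (-1:ℝ) ^ pc ((k &&& cpl ℓ m) &&& i')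
                * (x i * x i' * c m) := by
        intro m
        simp only [hS]
        rw [Finset.sum_mul_sum, Finset.mul_sum]
        refine Finset.sum_congr rfl fun i _ => ?_
        rw [Finset.mul_sum]
        exact Finset.sum_congr rfl fun i' _ => by ring
      rw [Finset.sum_congr rfl (fun m _ => expand m), Finset.sum_comm]
      exact Finset.sum_congr rfl fun i _ => Finset.sum_comm
    rw [step1, step2]
  simp only [walsh]
  rw [key, Finset.mul_sum, Finset.mul_sum]
  refine Finset.sum_congr rfl fun m _ => ?_
  have h2 : Real.sqrt ((2:ℝ)^ℓ) * Real.sqrt ((2:ℝ)^ℓ) = (2:ℝ)^ℓ :=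
    Real.mul_self_sqrt (le_of_lt hnpos)
  field_simp
  ring
end
end

section
/- (Approximate schema theorem for crossover.) Let x ∈ Λ, let χ be a crossover-mask distribution, and let y = C(x). Then for every u ∈ Ω and every k ∈ Ω_u, y_k^{(u)} ≥ x_k^{(u)} · Σ_{m ∈ Ω} ((χ_m + χ_{m̄})/2) · [(u ⊗ m = u) ∨ (u ⊗ m̄ = u)]. -/
open Finset

noncomputable section

lemma cpl_lt {ℓ m : ℕ} (hm : m < 2 ^ ℓ) : cpl ℓ m < 2 ^ ℓ :=
  Nat.xor_lt_two_pow hm (by have := Nat.one_le_two_pow (n := ℓ); omega)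

lemma and_cpl_self {ℓ m : ℕ} (hm : m < 2 ^ ℓ) : cpl ℓ m &&& m = 0 := by
  unfold cpl
  rw [Nat.and_xor_distrib_right, Nat.and_self, Nat.and_comm,
    Nat.and_two_pow_sub_one_of_lt_two_pow hm, Nat.xor_self]

lemma and_cpl_iff {ℓ u a : ℕ} (ha : a < 2 ^ ℓ) : a &&& cpl ℓ u = a ↔ a &&& u = 0 := by
  unfold cpl
  rw [Nat.and_xor_distrib_left, Nat.and_two_pow_sub_one_of_lt_two_pow ha]
  constructor
  · intro h
    have h' := congrArg (· ^^^ a) h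
    simpa [xor_cancel_right, Nat.xor_self] using h'
  · intro h; rw [h, Nat.zero_xor]

lemma schAvg_eq (ℓ : ℕ) (x : ℕ → ℝ) (u k : ℕ) (hu : u < 2 ^ ℓ) (hk : k ∈ omg ℓ u) :
    schAvg ℓ x u k = ∑ i ∈ (Finset.range (2 ^ ℓ)).filter (fun i => i &&& u = k), x i := by
  simp only [omg, Finset.mem_filter, Finset.mem_range] at hk
  obtain ⟨hk1, hk2⟩ := hk
  unfold schAvg
  refine Finset.sum_nbij' (i := fun a => a ^^^ k) (j := fun a => a ^^^ k) ?_ ?_ ?_ ?_ ?_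
  · intro a ha
    simp only [omg, Finset.mem_filter, Finset.mem_range] at ha ⊢
    obtain ⟨ha1, ha2⟩ := ha
    refine ⟨Nat.xor_lt_two_pow ha1 hk1, ?_⟩
    have hau : a &&& u = 0 := (and_cpl_iff ha1).1 ha2
    rw [Nat.and_xor_distrib_right, hau, hk2, Nat.zero_xor]
  · intro b hb
    simp only [omg, Finset.mem_filter, Finset.mem_range] at hb ⊢
    obtain ⟨hb1, hb2⟩ := hb
    refine ⟨Nat.xor_lt_two_pow hb1 hk1, ?_⟩
    rw [and_cpl_iff (Nat.xor_lt_two_pow hb1 hk1), Nat.and_xor_distrib_right, hb2, hk2, Nat.xor_self]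
  · intro a _; exact xor_cancel_right _ _
  · intro b _; exact xor_cancel_right _ _
  · intro a _; rfl

lemma e_and_left {ℓ u m : ℕ} (i j : ℕ) (hu : u < 2 ^ ℓ) (h : u &&& m = u) :
    ((i &&& m) ^^^ (j &&& cpl ℓ m)) &&& u = i &&& u := by
  have h1 : m &&& u = u := by rw [Nat.and_comm]; exact h
  have h2 : cpl ℓ m &&& u = 0 := by
    unfold cpl
    rw [Nat.and_xor_distrib_right, h1, Nat.and_comm,
      Nat.and_two_pow_sub_one_of_lt_two_pow hu, Nat.xor_self]
  rw [Nat.and_xor_distrib_right, Nat.and_assoc, Nat.and_assoc, h1, h2, Nat.and_zero, Nat.xor_zero]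

lemma e_and_right {ℓ u m : ℕ} (i j : ℕ) (hm : m < 2 ^ ℓ) (h : u &&& cpl ℓ m = u) :
    ((i &&& m) ^^^ (j &&& cpl ℓ m)) &&& u = j &&& u := by
  have h1 : cpl ℓ m &&& u = u := by rw [Nat.and_comm]; exact h
  have h2 : m &&& u = 0 := by
    calc m &&& u = m &&& (u &&& cpl ℓ m) := by rw [h]
    _ = u &&& (cpl ℓ m &&& m) := by rw [Nat.and_comm m, Nat.and_assoc]
    _ = 0 := by rw [and_cpl_self hm, Nat.and_zero]
  rw [Nat.and_xor_distrib_right, Nat.and_assoc, Nat.and_assoc, h1, h2, Nat.and_zero, Nat.zero_xor]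

lemma double_sum_ind (n : ℕ) (x : ℕ → ℝ) (hx1 : ∑ i ∈ Finset.range n, x i = 1) (g : ℕ → ℝ) :
    ∑ i ∈ Finset.range n, ∑ j ∈ Finset.range n, x i * x j * g i
      = ∑ i ∈ Finset.range n, x i * g i := by
  refine Finset.sum_congr rfl fun i _ => ?_
  calc ∑ j ∈ Finset.range n, x i * x j * g i
      = ∑ j ∈ Finset.range n, (x i * g i) * x j :=
        Finset.sum_congr rfl fun j _ => by ring
    _ = (x i * g i) * ∑ j ∈ Finset.range n, x j := by rw [← Finset.mul_sum]
    _ = x i * g i := by rw [hx1, mul_one]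


/-- **Approximate schema theorem for crossover.**  For `x ∈ Λ`, a crossover-mask
distribution `χ`, `y = C(x)`, `u ∈ Ω` and `k ∈ Ω_u`:
`y_k^{(u)} ≥ x_k^{(u)} Σ_m ((χ_m + χ_{m̄})/2) [(u⊗m = u) ∨ (u⊗m̄ = u)]`. -/
theorem approximate_schema_theorem_for_crossover
    (ℓ : ℕ) (hℓ : 1 ≤ ℓ) (x χ : ℕ → ℝ)
    (hx0 : ∀ i ∈ Finset.range (2 ^ ℓ), 0 ≤ x i)
    (hx1 : ∑ i ∈ Finset.range (2 ^ ℓ), x i = 1)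
    (hχ0 : ∀ m ∈ Finset.range (2 ^ ℓ), 0 ≤ χ m)
    (hχ1 : ∑ m ∈ Finset.range (2 ^ ℓ), χ m = 1)
    (u : ℕ) (hu : u < 2 ^ ℓ) (k : ℕ) (hk : k ∈ omg ℓ u) :
    schAvg ℓ (crossH ℓ χ x) u k ≥
      schAvg ℓ x u k *
        ∑ m ∈ Finset.range (2 ^ ℓ), ((χ m + χ (cpl ℓ m)) / 2) *
          (if u &&& m = u ∨ u &&& cpl ℓ m = u then (1 : ℝ) else 0) := by
    classical
  have hc0 : ∀ m ∈ Finset.range (2 ^ ℓ), 0 ≤ (χ m + χ (cpl ℓ m)) / 2 := by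
    intro m hm
    rw [Finset.mem_range] at hm
    have h1 := hχ0 m (Finset.mem_range.2 hm)
    have h2 := hχ0 (cpl ℓ m) (Finset.mem_range.2 (cpl_lt hm))
    linarith
  have hAind : ∀ w : ℕ → ℝ,
      ∑ i ∈ (Finset.range (2 ^ ℓ)).filter (fun i => i &&& u = k), w i
      = ∑ i ∈ Finset.range (2 ^ ℓ), w i * (if i &&& u = k then (1:ℝ) else 0) := by
    intro w
    rw [Finset.sum_filter]
    refine Finset.sum_congr rfl fun i _ => ?_
    by_cases hik : i &&& u = k <;> simp [hik]
  rw [schAvg_eq ℓ (crossH ℓ χ x) u k hu hk, schAvg_eq ℓ x u k hu hk]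
  have hL : ∑ r ∈ (Finset.range (2 ^ ℓ)).filter (fun i => i &&& u = k), crossH ℓ χ x r
      = ∑ m ∈ Finset.range (2 ^ ℓ), ∑ i ∈ Finset.range (2 ^ ℓ), ∑ j ∈ Finset.range (2 ^ ℓ),
          x i * x j * (((χ m + χ (cpl ℓ m)) / 2) *
            (if ((i &&& m) ^^^ (j &&& cpl ℓ m)) &&& u = k then (1:ℝ) else 0)) := by
    have h1 : ∀ r, crossH ℓ χ x r = ∑ i ∈ Finset.range (2 ^ ℓ), ∑ j ∈ Finset.range (2 ^ ℓ),
        ∑ m ∈ Finset.range (2 ^ ℓ),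
          x i * x j * (((χ m + χ (cpl ℓ m)) / 2) *
            (if (i &&& m) ^^^ (j &&& cpl ℓ m) = r then (1:ℝ) else 0)) := by
      intro r
      unfold crossH
      simp only [Finset.mul_sum]
    calc ∑ r ∈ (Finset.range (2 ^ ℓ)).filter (fun i => i &&& u = k), crossH ℓ χ x r
        = ∑ i ∈ Finset.range (2 ^ ℓ), ∑ j ∈ Finset.range (2 ^ ℓ), ∑ m ∈ Finset.range (2 ^ ℓ),
            x i * x j * (((χ m + χ (cpl ℓ m)) / 2) *
              ∑ r ∈ (Finset.range (2 ^ ℓ)).filter (fun i => i &&& u = k),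
                (if (i &&& m) ^^^ (j &&& cpl ℓ m) = r then (1:ℝ) else 0)) := by
            simp only [h1]
            rw [Finset.sum_comm]
            refine Finset.sum_congr rfl fun i _ => ?_
            rw [Finset.sum_comm]
            refine Finset.sum_congr rfl fun j _ => ?_
            rw [Finset.sum_comm]
            simp only [← Finset.mul_sum]
      _ = ∑ i ∈ Finset.range (2 ^ ℓ), ∑ j ∈ Finset.range (2 ^ ℓ), ∑ m ∈ Finset.range (2 ^ ℓ),
            x i * x j * (((χ m + χ (cpl ℓ m)) / 2) *
              (if ((i &&& m) ^^^ (j &&& cpl ℓ m)) &&& u = k then (1:ℝ) else 0)) := by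
            refine Finset.sum_congr rfl fun i hi => Finset.sum_congr rfl fun j hj =>
              Finset.sum_congr rfl fun m hm => ?_
            rw [Finset.mem_range] at hi hj hm
            have he : (i &&& m) ^^^ (j &&& cpl ℓ m) < 2 ^ ℓ :=
              Nat.xor_lt_two_pow (Nat.and_lt_two_pow i hm) (Nat.and_lt_two_pow j (cpl_lt hm))
            rw [Finset.sum_ite_eq _ ((i &&& m) ^^^ (j &&& cpl ℓ m)) (fun _ => (1:ℝ))]
            simp only [Finset.mem_filter, Finset.mem_range, he, true_and]
      _ = _ := (Finset.sum_congr rfl fun i _ => Finset.sum_comm).trans Finset.sum_comm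
  rw [hL, ge_iff_le, Finset.mul_sum]
  apply Finset.sum_le_sum
  intro m hm
  have hmn : m < 2 ^ ℓ := Finset.mem_range.1 hm
  by_cases hcond : u &&& m = u ∨ u &&& cpl ℓ m = u
  · rw [if_pos hcond, mul_one]
    have hval : ∑ i ∈ Finset.range (2 ^ ℓ), ∑ j ∈ Finset.range (2 ^ ℓ),
        x i * x j * (((χ m + χ (cpl ℓ m)) / 2) *
          (if ((i &&& m) ^^^ (j &&& cpl ℓ m)) &&& u = k then (1:ℝ) else 0))
        = (∑ i ∈ (Finset.range (2 ^ ℓ)).filter (fun i => i &&& u = k), x i) *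
            ((χ m + χ (cpl ℓ m)) / 2) := by
      rcases hcond with h | h
      · calc ∑ i ∈ Finset.range (2 ^ ℓ), ∑ j ∈ Finset.range (2 ^ ℓ),
              x i * x j * (((χ m + χ (cpl ℓ m)) / 2) *
                (if ((i &&& m) ^^^ (j &&& cpl ℓ m)) &&& u = k then (1:ℝ) else 0))
            = ∑ i ∈ Finset.range (2 ^ ℓ), ∑ j ∈ Finset.range (2 ^ ℓ),
                x i * x j * (((χ m + χ (cpl ℓ m)) / 2) *
                  (if i &&& u = k then (1:ℝ) else 0)) :=
              Finset.sum_congr rfl fun i _ => Finset.sum_congr rfl fun j _ => by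
                rw [e_and_left i j hu h]
          _ = ∑ i ∈ Finset.range (2 ^ ℓ),
                x i * (((χ m + χ (cpl ℓ m)) / 2) * (if i &&& u = k then (1:ℝ) else 0)) :=
              double_sum_ind (2 ^ ℓ) x hx1 _
          _ = (∑ i ∈ (Finset.range (2 ^ ℓ)).filter (fun i => i &&& u = k), x i) *
                ((χ m + χ (cpl ℓ m)) / 2) := by
              rw [hAind x, Finset.sum_mul]
              exact Finset.sum_congr rfl fun i _ => by ring
      · calc ∑ i ∈ Finset.range (2 ^ ℓ), ∑ j ∈ Finset.range (2 ^ ℓ),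
              x i * x j * (((χ m + χ (cpl ℓ m)) / 2) *
                (if ((i &&& m) ^^^ (j &&& cpl ℓ m)) &&& u = k then (1:ℝ) else 0))
            = ∑ j ∈ Finset.range (2 ^ ℓ), ∑ i ∈ Finset.range (2 ^ ℓ),
                x j * x i * (((χ m + χ (cpl ℓ m)) / 2) *
                  (if j &&& u = k then (1:ℝ) else 0)) := by
              rw [Finset.sum_comm]
              refine Finset.sum_congr rfl fun j _ => Finset.sum_congr rfl fun i _ => ?_
              rw [e_and_right i j hmn h]
              ring
          _ = ∑ j ∈ Finset.range (2 ^ ℓ),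
                x j * (((χ m + χ (cpl ℓ m)) / 2) * (if j &&& u = k then (1:ℝ) else 0)) :=
              double_sum_ind (2 ^ ℓ) x hx1 _
          _ = (∑ i ∈ (Finset.range (2 ^ ℓ)).filter (fun i => i &&& u = k), x i) *
                ((χ m + χ (cpl ℓ m)) / 2) := by
              rw [hAind x, Finset.sum_mul]
              exact Finset.sum_congr rfl fun i _ => by ring
    rw [hval]
  · rw [if_neg hcond, mul_zero, mul_zero]
    refine Finset.sum_nonneg fun i hi => Finset.sum_nonneg fun j hj => ?_
    refine mul_nonneg (mul_nonneg (hx0 i hi) (hx0 j hj)) (mul_nonneg (hc0 m hm) ?_)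
    split <;> norm_num
end
end

section
/- (Exact schema theorem for mutation.) Let x ∈ Λ, let U be the mutation heuristic for independent bitwise mutation with rates p_0,…,p_{ℓ−1} ∈ [0,1], and let y = U(x). Then for every u ∈ Ω, y^{(u)} = U^{(u)} x^{(u)}; explicitly, for every k ∈ Ω_u, y_k^{(u)} = Σ_{j ∈ Ω_u} μ^{(u)}_{k⊕j} x_j^{(u)}. -/
open Finset

noncomputable section

private lemma mem_omg {ℓ u v : ℕ} : v ∈ omg ℓ u ↔ v < 2 ^ ℓ ∧ v &&& u = v := by
  simp [omg, Finset.mem_filter, Finset.mem_range]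

private lemma and_cpl {ℓ u : ℕ} (hu : u < 2 ^ ℓ) : u &&& cpl ℓ u = 0 := by
  unfold cpl
  rw [Nat.and_xor_distrib_left, Nat.and_self,
    Nat.and_two_pow_sub_one_of_lt_two_pow hu, Nat.xor_self]

private lemma xor_mem_cpl {ℓ u i b : ℕ} (hi : i ∈ omg ℓ (cpl ℓ u))
    (hb : b ∈ omg ℓ (cpl ℓ u)) : i ^^^ b ∈ omg ℓ (cpl ℓ u) := by
  obtain ⟨hi1, hi2⟩ := mem_omg.mp hi
  obtain ⟨hb1, hb2⟩ := mem_omg.mp hb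
  exact mem_omg.mpr ⟨Nat.xor_lt_two_pow hi1 hb1,
    by rw [Nat.and_xor_distrib_right, hi2, hb2]⟩

/-- Reindexing a sum over `Ω_{ū}` by xor with a fixed element of `Ω_{ū}`. -/
private lemma sum_xor_reindex {ℓ u b : ℕ} (hb : b ∈ omg ℓ (cpl ℓ u)) (g : ℕ → ℝ) :
    ∑ i ∈ omg ℓ (cpl ℓ u), g (i ^^^ b) = ∑ i ∈ omg ℓ (cpl ℓ u), g i := by
  refine Finset.sum_nbij' (fun a => a ^^^ b) (fun a => a ^^^ b)
    (fun a ha => xor_mem_cpl ha hb) (fun a ha => xor_mem_cpl ha hb)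
    (fun a _ => Nat.xor_xor_cancel_right a b) (fun a _ => Nat.xor_xor_cancel_right a b)
    (fun a _ => rfl)

/-- Decomposition of a sum over `Ω` into sums over `Ω_u` and `Ω_{ū}`. -/
private lemma sum_decomp {ℓ u : ℕ} (hu : u < 2 ^ ℓ) (f : ℕ → ℝ) :
    ∑ n ∈ Finset.range (2 ^ ℓ), f n =
      ∑ j ∈ omg ℓ u, ∑ b ∈ omg ℓ (cpl ℓ u), f (j ^^^ b) := by
  have hcu : cpl ℓ u < 2 ^ ℓ :=
    Nat.xor_lt_two_pow hu (by have := Nat.one_le_two_pow (n := ℓ); omega)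
  rw [← Finset.sum_product']
  refine Finset.sum_nbij' (fun n => (n &&& u, n &&& cpl ℓ u)) (fun q => q.1 ^^^ q.2)
    ?_ ?_ ?_ ?_ ?_
  · intro n hn
    rw [Finset.mem_product]
    constructor
    · exact mem_omg.mpr ⟨Nat.and_lt_two_pow n hu,
        by rw [Nat.land_assoc, Nat.and_self]⟩
    · exact mem_omg.mpr ⟨Nat.and_lt_two_pow n hcu,
        by rw [Nat.land_assoc, Nat.and_self]⟩
  · intro q hq
    rw [Finset.mem_product] at hq
    obtain ⟨h1, h2⟩ := mem_omg.mp hq.1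
    obtain ⟨h3, h4⟩ := mem_omg.mp hq.2
    exact Finset.mem_range.mpr (Nat.xor_lt_two_pow h1 h3)
  · intro n hn
    show (n &&& u) ^^^ (n &&& cpl ℓ u) = n
    rw [← Nat.and_xor_distrib_left]
    unfold cpl
    rw [Nat.xor_xor_cancel_left,
      Nat.and_two_pow_sub_one_of_lt_two_pow (Finset.mem_range.mp hn)]
  · intro q hq
    rw [Finset.mem_product] at hq
    obtain ⟨h1, h2⟩ := mem_omg.mp hq.1
    obtain ⟨h3, h4⟩ := mem_omg.mp hq.2
    have hbu : q.2 &&& u = 0 := by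
      rw [← h4, Nat.land_assoc, Nat.land_comm (cpl ℓ u) u, and_cpl hu, Nat.land_comm,
        Nat.zero_and]
    have hjc : q.1 &&& cpl ℓ u = 0 := by
      rw [← h2, Nat.land_assoc, and_cpl hu, Nat.land_comm, Nat.zero_and]
    have e1 : (q.1 ^^^ q.2) &&& u = q.1 := by
      rw [Nat.and_xor_distrib_right, h2, hbu, Nat.xor_zero]
    have e2 : (q.1 ^^^ q.2) &&& cpl ℓ u = q.2 := by
      rw [Nat.and_xor_distrib_right, h4, hjc, Nat.zero_xor]
    exact Prod.ext e1 e2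
  · intro n hn
    show f n = f ((n &&& u) ^^^ (n &&& cpl ℓ u))
    congr 1
    rw [← Nat.and_xor_distrib_left]
    unfold cpl
    rw [Nat.xor_xor_cancel_left,
      Nat.and_two_pow_sub_one_of_lt_two_pow (Finset.mem_range.mp hn)]

private lemma xor_rearrange (j b i k : ℕ) :
    (j ^^^ b) ^^^ (i ^^^ k) = ((i ^^^ b) ^^^ (k ^^^ j)) := by
  apply Nat.eq_of_testBit_eq
  intro n
  simp only [Nat.testBit_xor]
  cases j.testBit n <;> cases b.testBit n <;> cases i.testBit n <;> cases k.testBit n <;> rfl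

/-- **Exact schema theorem for mutation.**  For `x ∈ Λ`, independent bitwise mutation
with rates `p_i ∈ [0,1]`, and `y = U(x)`: for every `u ∈ Ω`, `y^{(u)} = U^{(u)} x^{(u)}`;
explicitly, for every `k ∈ Ω_u`, `y_k^{(u)} = Σ_{j ∈ Ω_u} μ^{(u)}_{k⊕j} x_j^{(u)}`. -/
theorem exact_schema_theorem_for_mutation
    (ℓ : ℕ) (hℓ : 1 ≤ ℓ) (x : ℕ → ℝ)
    (hx0 : ∀ i ∈ Finset.range (2 ^ ℓ), 0 ≤ x i)
    (hx1 : ∑ i ∈ Finset.range (2 ^ ℓ), x i = 1)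
    (p : ℕ → ℝ) (hp : ∀ i < ℓ, p i ∈ Set.Icc (0 : ℝ) 1)
    (u : ℕ) (hu : u < 2 ^ ℓ) (k : ℕ) (hk : k ∈ omg ℓ u) :
    schAvg ℓ (mutH ℓ (mutDist ℓ p) x) u k =
      ∑ j ∈ omg ℓ u, schAvg ℓ (mutDist ℓ p) u (k ^^^ j) * schAvg ℓ x u j := by
  have hkm := mem_omg.mp hk
  unfold schAvg mutH
  have step1 : ∀ ii ∈ omg ℓ (cpl ℓ u),
      (∑ n ∈ Finset.range (2 ^ ℓ), mutDist ℓ p (n ^^^ (ii ^^^ k)) * x n) =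
      ∑ j ∈ omg ℓ u, ∑ b ∈ omg ℓ (cpl ℓ u),
        mutDist ℓ p ((ii ^^^ b) ^^^ (k ^^^ j)) * x (j ^^^ b) := by
    intro ii _
    rw [sum_decomp hu (fun n => mutDist ℓ p (n ^^^ (ii ^^^ k)) * x n)]
    refine Finset.sum_congr rfl fun j _ => Finset.sum_congr rfl fun b _ => ?_
    rw [xor_rearrange]
  rw [Finset.sum_congr rfl step1, Finset.sum_comm]
  refine Finset.sum_congr rfl fun j hj => ?_
  rw [Finset.sum_comm]
  have inner : ∀ b ∈ omg ℓ (cpl ℓ u),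
      (∑ ii ∈ omg ℓ (cpl ℓ u), mutDist ℓ p ((ii ^^^ b) ^^^ (k ^^^ j)) * x (j ^^^ b)) =
      (∑ ii ∈ omg ℓ (cpl ℓ u), mutDist ℓ p (ii ^^^ (k ^^^ j))) * x (j ^^^ b) := by
    intro b hb
    rw [← Finset.sum_mul]
    congr 1
    exact sum_xor_reindex hb (fun a => mutDist ℓ p (a ^^^ (k ^^^ j)))
  rw [Finset.sum_congr rfl inner, ← Finset.mul_sum]
  congr 1
  refine Finset.sum_congr rfl fun b _ => ?_
  rw [Nat.xor_comm j b]
end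
end

section
/- (Approximate schema theorem for mutation.) Let x ∈ Λ, let p ∈ [0,1], let U be the mutation heuristic for independent bitwise mutation with all rates p_i = p, and let y = U(x). Then for every u ∈ Ω and every k ∈ Ω_u, y_k^{(u)} ≥ (1 − p)^{#u} · x_k^{(u)}. -/
open Finset

noncomputable section

lemma sum_prod_testBit : ∀ (ℓ : ℕ) (G : ℕ → Bool → ℝ),
    ∑ m ∈ Finset.range (2 ^ ℓ), ∏ t ∈ Finset.range ℓ, G t (m.testBit t)
      = ∏ t ∈ Finset.range ℓ, (G t true + G t false) := by
  intro ℓ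
  induction ℓ with
  | zero => intro G; simp
  | succ n ih =>
    intro G
    have h1 : ∑ m ∈ Finset.range (2 ^ (n+1)), ∏ t ∈ Finset.range (n+1), G t (m.testBit t)
        = ∑ q ∈ (Finset.range (2 ^ n)) ×ˢ (Finset.range 2),
            ∏ t ∈ Finset.range (n+1), G t ((2 * q.1 + q.2).testBit t) := by
      refine (Finset.sum_nbij' (i := fun (q : ℕ × ℕ) => 2 * q.1 + q.2)
        (j := fun m => (m / 2, m % 2)) ?_ ?_ ?_ ?_ ?_).symm
      · rintro ⟨a, b⟩ hab
        simp only [Finset.mem_product, Finset.mem_range] at hab ⊢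
        have : (2:ℕ)^(n+1) = 2 * 2^n := by ring
        omega
      · intro m hm
        simp only [Finset.mem_product, Finset.mem_range] at hm ⊢
        have : (2:ℕ)^(n+1) = 2 * 2^n := by ring
        omega
      · rintro ⟨a, b⟩ hab
        simp only [Finset.mem_product, Finset.mem_range] at hab
        have : (2 * a + b) / 2 = a ∧ (2 * a + b) % 2 = b := by omega
        simp [this.1, this.2]
      · intro m hm; simp; omega
      · intro a ha; rfl
    rw [h1, Finset.sum_product]
    have h2 : ∀ a ∈ Finset.range (2 ^ n),
        ∑ b ∈ Finset.range 2, ∏ t ∈ Finset.range (n+1), G t ((2 * a + b).testBit t)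
        = (∏ t ∈ Finset.range n, ((fun t => G (t+1)) t (a.testBit t))) * (G 0 true + G 0 false) := by
      intro a ha
      have hb : ∀ b, b < 2 → ∏ t ∈ Finset.range (n+1), G t ((2 * a + b).testBit t)
          = (∏ t ∈ Finset.range n, G (t+1) (a.testBit t)) * G 0 ((2*a+b).testBit 0) := by
        intro b hblt
        rw [Finset.prod_range_succ']
        congr 1
        refine Finset.prod_congr rfl fun t ht => ?_
        rw [Nat.testBit_succ]
        congr 2
        omega
      rw [Finset.sum_range_succ, Finset.sum_range_one, hb 0 (by norm_num), hb 1 (by norm_num)]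
      have e0 : (2*a+0).testBit 0 = false := by
        simp [Nat.testBit_eq_decide_div_mod_eq]
      have e1 : (2*a+1).testBit 0 = true := by
        simp [Nat.testBit_eq_decide_div_mod_eq]
      rw [e0, e1]; ring
    rw [Finset.sum_congr rfl h2, ← Finset.sum_mul, ih (fun t => G (t+1)),
      Finset.prod_range_succ']

lemma pc_eq : ∀ (ℓ u : ℕ), u < 2 ^ ℓ →
    pc u = ((Finset.range ℓ).filter (fun t => u.testBit t)).card := by
  intro ℓ
  induction ℓ with
  | zero => intro u hu; interval_cases u; simp [pc]
  | succ n ih =>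
    intro u hu
    have hdig : pc u = u % 2 + pc (u / 2) := by
      rcases Nat.eq_zero_or_pos u with h | h
      · simp [h, pc]
      · unfold pc
        rw [Nat.digits_def' (by norm_num : 1 < 2) h]
        simp
    have hu2 : u / 2 < 2 ^ n := by
      have : (2:ℕ)^(n+1) = 2 * 2^n := by ring
      omega
    rw [hdig, ih _ hu2]
    rw [Finset.card_filter, Finset.card_filter, Finset.sum_range_succ']
    have : ∀ t, u.testBit (t+1) = (u/2).testBit t := fun t => Nat.testBit_succ u t
    simp only [this]
    have h0 : (if u.testBit 0 then (1:ℕ) else 0) = u % 2 := by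
      rcases Nat.mod_two_eq_zero_or_one u with h | h <;>
        simp [Nat.testBit_eq_decide_div_mod_eq, h]
    omega

lemma sum_mutDist (ℓ u : ℕ) (p : ℝ) (hu : u < 2 ^ ℓ) :
    ∑ m ∈ omg ℓ (cpl ℓ u), mutDist ℓ (fun _ => p) m = (1 - p) ^ pc u := by
  set w := cpl ℓ u with hw
  have hwbit : ∀ t, t < ℓ → w.testBit t = !u.testBit t := by
    intro t ht
    simp [hw, cpl, Nat.testBit_xor, Nat.testBit_two_pow_sub_one, ht]
  set G : ℕ → Bool → ℝ := fun t b => if b then (if w.testBit t then p else 0) else (1 - p)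
    with hG
  have h1 : ∑ m ∈ omg ℓ w, mutDist ℓ (fun _ => p) m
      = ∑ m ∈ Finset.range (2 ^ ℓ), ∏ t ∈ Finset.range ℓ, G t (m.testBit t) := by
    rw [← Finset.sum_filter_add_sum_filter_not (Finset.range (2 ^ ℓ))
      (fun m => m &&& w = m)]
    have hz : ∑ m ∈ (Finset.range (2 ^ ℓ)).filter (fun m => ¬ m &&& w = m),
        ∏ t ∈ Finset.range ℓ, G t (m.testBit t) = 0 := by
      refine Finset.sum_eq_zero fun m hm => ?_
      simp only [Finset.mem_filter, Finset.mem_range] at hm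
      obtain ⟨hmlt, hmne⟩ := hm
      have : ∃ t, m.testBit t = true ∧ w.testBit t = false := by
        by_contra hc
        push_neg at hc
        apply hmne
        apply Nat.eq_of_testBit_eq
        intro t
        rw [Nat.testBit_and]
        cases hmt : m.testBit t
        · simp
        · simp [hc t hmt]
      obtain ⟨t, hmt, hwt⟩ := this
      have htl : t < ℓ := by
        by_contra hc
        push_neg at hc
        have : m.testBit t = false :=
          Nat.testBit_lt_two_pow (lt_of_lt_of_le hmlt (Nat.pow_le_pow_right (by norm_num) hc))
        simp [this] at hmt
      refine Finset.prod_eq_zero (Finset.mem_range.mpr htl) ?_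
      simp [hG, hmt, hwt]
    rw [hz, add_zero]
    refine Finset.sum_congr rfl fun m hm => ?_
    simp only [Finset.mem_filter] at hm
    refine Finset.prod_congr rfl fun t ht => ?_
    have hbit : (m.testBit t && w.testBit t) = m.testBit t := by
      rw [← Nat.testBit_and, hm.2]
    cases hmt : m.testBit t
    · simp [hG, hmt]
    · rw [hmt] at hbit; simp only [Bool.true_and] at hbit
      simp [hG, hmt, hbit]
  rw [h1, sum_prod_testBit]
  have h2 : ∀ t ∈ Finset.range ℓ, G t true + G t false
      = (if u.testBit t then (1 - p) else 1) := by
    intro t ht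
    rw [Finset.mem_range] at ht
    rcases hut : u.testBit t with _ | _
    · simp [hG, hwbit t ht, hut]
    · simp [hG, hwbit t ht, hut]
  rw [Finset.prod_congr rfl h2, Finset.prod_ite, Finset.prod_const, Finset.prod_const,
    one_pow, mul_one, pc_eq ℓ u hu]

lemma mutDist_nonneg (ℓ : ℕ) (p : ℝ) (h0 : 0 ≤ p) (h1 : p ≤ 1) (m : ℕ) :
    0 ≤ mutDist ℓ (fun _ => p) m := by
  refine Finset.prod_nonneg fun i _ => ?_
  dsimp only
  split <;> linarith

lemma xor_xor_cancel (a b c : ℕ) : (a ^^^ c) ^^^ (b ^^^ c) = a ^^^ b := by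
  rw [Nat.xor_comm b c, Nat.xor_assoc, ← Nat.xor_assoc c c b, Nat.xor_self, Nat.zero_xor]


/-- **Approximate schema theorem for mutation.**  For `x ∈ Λ`, `p ∈ [0,1]`, and
`y = U(x)` for independent bitwise mutation with all rates equal to `p`:
for every `u ∈ Ω` and `k ∈ Ω_u`, `y_k^{(u)} ≥ (1-p)^{#u} x_k^{(u)}`. -/
theorem approximate_schema_theorem_for_mutation
    (ℓ : ℕ) (hℓ : 1 ≤ ℓ) (x : ℕ → ℝ)
    (hx0 : ∀ i ∈ Finset.range (2 ^ ℓ), 0 ≤ x i)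
    (hx1 : ∑ i ∈ Finset.range (2 ^ ℓ), x i = 1)
    (p : ℝ) (hp : p ∈ Set.Icc (0 : ℝ) 1)
    (u : ℕ) (hu : u < 2 ^ ℓ) (k : ℕ) (hk : k ∈ omg ℓ u) :
    schAvg ℓ (mutH ℓ (mutDist ℓ (fun _ => p)) x) u k ≥
      (1 - p) ^ pc u * schAvg ℓ x u k := by
  obtain ⟨hp0, hp1⟩ := hp
  set μ := mutDist ℓ (fun _ => p) with hμ
  have hμ0 : ∀ m, 0 ≤ μ m := mutDist_nonneg ℓ p hp0 hp1
  have hk' : k < 2 ^ ℓ := by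
    simp only [omg, Finset.mem_filter, Finset.mem_range] at hk
    exact hk.1
  set w := cpl ℓ u with hw
  have hmem : ∀ m, m ∈ omg ℓ w ↔ m < 2 ^ ℓ ∧ m &&& w = m := by
    intro m; simp [omg]
  set S := (omg ℓ w).image (· ^^^ k) with hS
  have hSsub : S ⊆ Finset.range (2 ^ ℓ) := by
    intro j hj
    simp only [hS, Finset.mem_image] at hj
    obtain ⟨i, hi, rfl⟩ := hj
    exact Finset.mem_range.mpr (Nat.xor_lt_two_pow ((hmem i).mp hi).1 hk')
  have hc : ∑ m ∈ omg ℓ w, μ m = (1 - p) ^ pc u := sum_mutDist ℓ u p hu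
  -- inner sum evaluation for j in S
  have hT : ∀ j ∈ S, ∑ i ∈ omg ℓ w, μ (j ^^^ (i ^^^ k)) = (1 - p) ^ pc u := by
    intro j hj
    simp only [hS, Finset.mem_image] at hj
    obtain ⟨i₀, hi₀, rfl⟩ := hj
    rw [← hc]
    refine Finset.sum_nbij' (i := fun i => i₀ ^^^ i) (j := fun i => i₀ ^^^ i)
      ?_ ?_ ?_ ?_ ?_
    · intro a ha
      rw [hmem] at ha hi₀ ⊢
      exact ⟨Nat.xor_lt_two_pow hi₀.1 ha.1,
        by rw [Nat.and_xor_distrib_right, hi₀.2, ha.2]⟩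
    · intro a ha
      rw [hmem] at ha hi₀ ⊢
      exact ⟨Nat.xor_lt_two_pow hi₀.1 ha.1,
        by rw [Nat.and_xor_distrib_right, hi₀.2, ha.2]⟩
    · intro a _; show i₀ ^^^ (i₀ ^^^ a) = a
      rw [← Nat.xor_assoc, Nat.xor_self, Nat.zero_xor]
    · intro a _; show i₀ ^^^ (i₀ ^^^ a) = a
      rw [← Nat.xor_assoc, Nat.xor_self, Nat.zero_xor]
    · intro a _
      congr 1
      rw [xor_xor_cancel]
  rw [ge_iff_le, schAvg, schAvg, Finset.mul_sum, ← hw]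
  have hL : ∑ i ∈ omg ℓ w, (1 - p) ^ pc u * x (i ^^^ k)
      = ∑ j ∈ S, (1 - p) ^ pc u * x j := by
    rw [hS]
    refine (Finset.sum_image (f := fun j => (1 - p) ^ pc u * x j)
      (g := fun i => i ^^^ k) fun a ha b hb h => ?_).symm
    have := congrArg (· ^^^ k) h
    simpa [Nat.xor_xor_cancel_right] using this
  have hR : ∑ i ∈ omg ℓ w, mutH ℓ μ x (i ^^^ k)
      = ∑ j ∈ Finset.range (2 ^ ℓ), ∑ i ∈ omg ℓ w, μ (j ^^^ (i ^^^ k)) * x j := by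
    rw [Finset.sum_comm]
    rfl
  rw [hL, hR]
  calc ∑ j ∈ S, (1 - p) ^ pc u * x j
      = ∑ j ∈ S, ∑ i ∈ omg ℓ w, μ (j ^^^ (i ^^^ k)) * x j := by
        refine Finset.sum_congr rfl fun j hj => ?_
        rw [← Finset.sum_mul, hT j hj]
    _ ≤ ∑ j ∈ Finset.range (2 ^ ℓ), ∑ i ∈ omg ℓ w, μ (j ^^^ (i ^^^ k)) * x j := by
        refine Finset.sum_le_sum_of_subset_of_nonneg hSsub fun j hjr _ => ?_
        exact Finset.sum_nonneg fun i _ => mul_nonneg (hμ0 _) (hx0 j hjr)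
end
end
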